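/- For every x ∈ [73789/177147, 911/2187) with x ≠ c, one has σ²(x) < σ²(c); more precisely, σ² is strictly increasing on [73789/177147, c] and strictly decreasing on [c, 911/2187). (Here 177147 = 3^11 and 2187 = 3^7, and 73789/3^11 < c < 911/3^7.) -/

import Mathlib

open scoped BigOperators

/-- `V x ξ = min x ξ - x * ξ`. -/
noncomputable def V (x ξ : ℝ) : ℝ := min x ξ - x * ξ

/-- `σ²(x) = V(⟨x⟩, ⟨x⟩) + 2 ∑_{k=1}^∞ 6^{-k} V(⟨2^k x⟩, ⟨3^k x⟩)`. -/
noncomputable def sigmaSq (x : ℝ) : ℝ :=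
  V (Int.fract x) (Int.fract x) +
    2 * ∑' k : ℕ, (1 / 6 ^ (k + 1) : ℝ) *
      V (Int.fract ((2 : ℝ) ^ (k + 1) * x)) (Int.fract ((3 : ℝ) ^ (k + 1) * x))

/-- `c = 277/665 = 277/(3^6 - 2^6)`. -/
noncomputable def c : ℝ := 277 / 665

lemma V_symm (p q : ℝ) : V p q = V q p := by
  simp [V, min_comm, mul_comm]

lemma V_eq_right {p q : ℝ} (h : q ≤ p) : V p q = q - p * q := by
  simp [V, min_eq_right h]

lemma V_eq_left {p q : ℝ} (h : p ≤ q) : V p q = p - p * q := by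
  simp [V, min_eq_left h]

lemma V_nonneg {p q : ℝ} (hp0 : 0 ≤ p) (hp1 : p ≤ 1) (hq0 : 0 ≤ q) (hq1 : q ≤ 1) :
    0 ≤ V p q := by
  rcases le_total p q with h | h
  · rw [V_eq_left h]; nlinarith
  · rw [V_eq_right h]; nlinarith

lemma V_le_quarter {p q : ℝ} (hp0 : 0 ≤ p) (hp1 : p ≤ 1) (hq0 : 0 ≤ q) (hq1 : q ≤ 1) :
    V p q ≤ 1/4 := by
  rcases le_total p q with h | h
  · rw [V_eq_left h]; nlinarith [mul_nonneg hp0 (sub_nonneg.mpr h), sq_nonneg (2*p-1)]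
  · rw [V_eq_right h]; nlinarith [mul_nonneg hq0 (sub_nonneg.mpr h), sq_nonneg (2*q-1)]

lemma V_lip {p p' q : ℝ} (hp0 : 0 ≤ p) (hp1 : p ≤ 1) (hp0' : 0 ≤ p') (hp1' : p' ≤ 1)
    (hq0 : 0 ≤ q) (hq1 : q ≤ 1) : |V p q - V p' q| ≤ |p - p'| := by
  rcases le_total p q with h1 | h1 <;> rcases le_total p' q with h2 | h2
  · rw [V_eq_left h1, V_eq_left h2, abs_sub_le_iff]
    rcases abs_cases (p - p') with ⟨he, _⟩ | ⟨he, _⟩ <;> constructor <;> nlinarith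
  · rw [V_eq_left h1, V_eq_right h2, abs_sub_le_iff]
    rcases abs_cases (p - p') with ⟨he, _⟩ | ⟨he, _⟩ <;> constructor <;> nlinarith
  · rw [V_eq_right h1, V_eq_left h2, abs_sub_le_iff]
    rcases abs_cases (p - p') with ⟨he, _⟩ | ⟨he, _⟩ <;> constructor <;> nlinarith
  · rw [V_eq_right h1, V_eq_right h2, abs_sub_le_iff]
    rcases abs_cases (p - p') with ⟨he, _⟩ | ⟨he, _⟩ <;> constructor <;> nlinarith

lemma fract_eq_of (r m : ℝ) (hm : ∃ z : ℤ, (z : ℝ) = m) (h1 : m ≤ r) (h2 : r < m + 1) :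
    Int.fract r = r - m := by
  rcases hm with ⟨z, hz⟩
  rw [Int.fract_eq_iff]
  exact ⟨by linarith, by linarith, ⟨z, by rw [hz]; ring⟩⟩

lemma V_fract_lip (q : ℝ) (hq0 : 0 ≤ q) (hq1 : q ≤ 1) (u u' : ℝ) :
    |V (Int.fract u) q - V (Int.fract u') q| ≤ |u - u'| := by
  have b1 := Int.fract_nonneg u
  have b2 := (Int.fract_lt_one u).le
  have b1' := Int.fract_nonneg u'
  have b2' := (Int.fract_lt_one u').le
  rcases le_total 1 |u - u'| with hbig | hsmall
  · have h1 := V_nonneg b1 b2 hq0 hq1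
    have h2 := V_le_quarter b1 b2 hq0 hq1
    have h1' := V_nonneg b1' b2' hq0 hq1
    have h2' := V_le_quarter b1' b2' hq0 hq1
    rw [abs_sub_le_iff]; constructor <;> linarith
  · -- floors differ by at most one
    have key : ∀ v v' : ℝ, v' ≤ v → v - v' ≤ 1 →
        |V (Int.fract v) q - V (Int.fract v') q| ≤ |v - v'| := by
      intro v v' hle hdiff
      have hf : ⌊v'⌋ = ⌊v⌋ ∨ ⌊v'⌋ + 1 = ⌊v⌋ := by
        have h1 : ⌊v'⌋ ≤ ⌊v⌋ := Int.floor_le_floor hle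
        have h2 : ⌊v⌋ ≤ ⌊v'⌋ + 1 := by
          have : ⌊v⌋ ≤ ⌊v' + 1⌋ := Int.floor_le_floor (by linarith)
          simpa using this
        omega
      rcases hf with hf | hf
      · have : Int.fract v - Int.fract v' = v - v' := by
          rw [Int.fract, Int.fract, hf]; ring
        calc |V (Int.fract v) q - V (Int.fract v') q| ≤ |Int.fract v - Int.fract v'| :=
              V_lip (Int.fract_nonneg v) (Int.fract_lt_one v).le
                (Int.fract_nonneg v') (Int.fract_lt_one v').le hq0 hq1
          _ ≤ |v - v'| := by rw [this]
      · have hsum : Int.fract v + (1 - Int.fract v') = v - v' := by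
          have e1 : Int.fract v = v - ⌊v⌋ := rfl
          have e2 : Int.fract v' = v' - ⌊v'⌋ := rfl
          rw [e1, e2, ← hf]; push_cast; ring
        have hVv : V (Int.fract v) q ≤ Int.fract v := by
          have : min (Int.fract v) q ≤ Int.fract v := min_le_left _ _
          have hnn : 0 ≤ Int.fract v * q := mul_nonneg (Int.fract_nonneg v) hq0
          simp only [V]; linarith
        have hVv' : V (Int.fract v') q ≤ 1 - Int.fract v' := by
          have : min (Int.fract v') q ≤ q := min_le_right _ _
          simp only [V]
          nlinarith [mul_nonneg (sub_nonneg.mpr hq1)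
            (sub_nonneg.mpr (Int.fract_lt_one v').le)]
        have h1 := V_nonneg (Int.fract_nonneg v) (Int.fract_lt_one v).le hq0 hq1
        have h1' := V_nonneg (Int.fract_nonneg v') (Int.fract_lt_one v').le hq0 hq1
        rw [abs_sub_le_iff]
        constructor <;> rw [abs_of_nonneg (by linarith : (0:ℝ) ≤ v - v')] <;> linarith
    rcases le_total u' u with h | h
    · exact key u u' h (by rcases abs_cases (u - u') with ⟨he,_⟩|⟨he,_⟩ <;> linarith)
    · rw [abs_sub_comm, abs_sub_comm u u']
      exact key u' u h (by rcases abs_cases (u - u') with ⟨he,_⟩|⟨he,_⟩ <;> linarith)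


noncomputable def fTerm (x : ℝ) (k : ℕ) : ℝ :=
  (1 / 6 ^ (k + 1) : ℝ) * V (Int.fract ((2 : ℝ) ^ (k + 1) * x)) (Int.fract ((3 : ℝ) ^ (k + 1) * x))

lemma fTerm_nonneg (x : ℝ) (k : ℕ) : 0 ≤ fTerm x k := by
  apply mul_nonneg (by positivity)
  exact V_nonneg (Int.fract_nonneg _) (Int.fract_lt_one _).le
    (Int.fract_nonneg _) (Int.fract_lt_one _).le

lemma fTerm_le (x : ℝ) (k : ℕ) : fTerm x k ≤ (1/6 : ℝ) ^ (k + 1) := by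
  have h := V_le_quarter (Int.fract_nonneg ((2:ℝ)^(k+1)*x)) (Int.fract_lt_one _).le
    (Int.fract_nonneg ((3:ℝ)^(k+1)*x)) (Int.fract_lt_one _).le
  have h6 : (1/6 : ℝ) ^ (k+1) = 1 / 6 ^ (k+1) := by rw [one_div_pow]
  rw [fTerm, h6]
  calc (1 / 6 ^ (k+1) : ℝ) * V _ _ ≤ (1 / 6 ^ (k+1) : ℝ) * 1 := by
        apply mul_le_mul_of_nonneg_left (by linarith) (by positivity)
    _ ≤ 1 / 6 ^ (k+1) := by norm_num

lemma summable_geom_shift (r : ℝ) (h0 : 0 ≤ r) (h1 : r < 1) :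
    Summable (fun k : ℕ => r ^ (k + 1)) :=
  (summable_nat_add_iff 1).2 (summable_geometric_of_lt_one h0 h1)

lemma summable_fTerm (x : ℝ) : Summable (fTerm x) :=
  Summable.of_nonneg_of_le (fTerm_nonneg x) (fTerm_le x)
    (summable_geom_shift (1/6) (by norm_num) (by norm_num))

noncomputable def tailSum (K : ℕ) (x : ℝ) : ℝ := ∑' k : ℕ, fTerm x (k + K)

lemma sigma_decomp (K : ℕ) (x : ℝ) :
    sigmaSq x = V (Int.fract x) (Int.fract x) +
      2 * ((∑ i ∈ Finset.range K, (1 / 6 ^ (i + 1) : ℝ) *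
        V (Int.fract ((2 : ℝ) ^ (i + 1) * x)) (Int.fract ((3 : ℝ) ^ (i + 1) * x))) +
        tailSum K x) := by
  rw [sigmaSq]
  exact congrArg (fun t => V (Int.fract x) (Int.fract x) + 2 * t)
    ((summable_fTerm x).sum_add_tsum_nat_add K).symm

lemma tail_diff_le (K : ℕ) (x y : ℝ) :
    |tailSum K y - tailSum K x| ≤
      ((1/3 : ℝ) ^ (K + 1) * (3/2) + (1/2 : ℝ) ^ (K + 1) * 2) * |y - x| := by
  have hsx : Summable (fun k => fTerm x (k + K)) := (summable_nat_add_iff K).2 (summable_fTerm x)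
  have hsy : Summable (fun k => fTerm y (k + K)) := (summable_nat_add_iff K).2 (summable_fTerm y)
  have hterm : ∀ k : ℕ, |fTerm y (k + K) - fTerm x (k + K)| ≤
      ((1/3 : ℝ) ^ (K + 1) * (1/3) ^ k + (1/2 : ℝ) ^ (K + 1) * (1/2) ^ k) * |y - x| := by
    intro k
    set j := k + K + 1 with hj
    have key : |V (Int.fract ((2:ℝ)^j*y)) (Int.fract ((3:ℝ)^j*y)) -
        V (Int.fract ((2:ℝ)^j*x)) (Int.fract ((3:ℝ)^j*x))| ≤
        (2:ℝ)^j * |y - x| + (3:ℝ)^j * |y - x| := by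
      have t1 : |V (Int.fract ((2:ℝ)^j*y)) (Int.fract ((3:ℝ)^j*y)) -
          V (Int.fract ((2:ℝ)^j*x)) (Int.fract ((3:ℝ)^j*y))| ≤ (2:ℝ)^j * |y - x| := by
        have := V_fract_lip (Int.fract ((3:ℝ)^j*y)) (Int.fract_nonneg _)
          (Int.fract_lt_one _).le ((2:ℝ)^j*y) ((2:ℝ)^j*x)
        calc _ ≤ |(2:ℝ)^j*y - (2:ℝ)^j*x| := this
          _ = (2:ℝ)^j * |y - x| := by
            rw [← mul_sub, abs_mul, abs_of_pos (by positivity : (0:ℝ) < (2:ℝ)^j)]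
      have t2 : |V (Int.fract ((2:ℝ)^j*x)) (Int.fract ((3:ℝ)^j*y)) -
          V (Int.fract ((2:ℝ)^j*x)) (Int.fract ((3:ℝ)^j*x))| ≤ (3:ℝ)^j * |y - x| := by
        rw [V_symm (Int.fract ((2:ℝ)^j*x)) (Int.fract ((3:ℝ)^j*y)),
            V_symm (Int.fract ((2:ℝ)^j*x)) (Int.fract ((3:ℝ)^j*x))]
        have := V_fract_lip (Int.fract ((2:ℝ)^j*x)) (Int.fract_nonneg _)
          (Int.fract_lt_one _).le ((3:ℝ)^j*y) ((3:ℝ)^j*x)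
        calc _ ≤ |(3:ℝ)^j*y - (3:ℝ)^j*x| := this
          _ = (3:ℝ)^j * |y - x| := by
            rw [← mul_sub, abs_mul, abs_of_pos (by positivity : (0:ℝ) < (3:ℝ)^j)]
      calc |V (Int.fract ((2:ℝ)^j*y)) (Int.fract ((3:ℝ)^j*y)) -
          V (Int.fract ((2:ℝ)^j*x)) (Int.fract ((3:ℝ)^j*x))|
          ≤ |V (Int.fract ((2:ℝ)^j*y)) (Int.fract ((3:ℝ)^j*y)) -
              V (Int.fract ((2:ℝ)^j*x)) (Int.fract ((3:ℝ)^j*y))| +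
            |V (Int.fract ((2:ℝ)^j*x)) (Int.fract ((3:ℝ)^j*y)) -
              V (Int.fract ((2:ℝ)^j*x)) (Int.fract ((3:ℝ)^j*x))| := abs_sub_le _ _ _
          _ ≤ (2:ℝ)^j * |y - x| + (3:ℝ)^j * |y - x| := add_le_add t1 t2
    have e1 : fTerm y (k + K) - fTerm x (k + K) = (1/6^j : ℝ) *
        (V (Int.fract ((2:ℝ)^j*y)) (Int.fract ((3:ℝ)^j*y)) -
         V (Int.fract ((2:ℝ)^j*x)) (Int.fract ((3:ℝ)^j*x))) := by
      rw [fTerm, fTerm, hj]; ring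
    rw [e1, abs_mul, abs_of_pos (by positivity : (0:ℝ) < (1:ℝ)/6^j)]
    have h2 : (1/6^j : ℝ) * 2^j = (1/3)^j := by
      rw [one_div, ← inv_pow, ← mul_pow]; norm_num
    have h3 : (1/6^j : ℝ) * 3^j = (1/2)^j := by
      rw [one_div, ← inv_pow, ← mul_pow]; norm_num
    have e3 : (1/3:ℝ)^j = (1/3)^(K+1)*(1/3)^k := by
      rw [show j = (K+1)+k by omega, pow_add]
    have e2 : (1/2:ℝ)^j = (1/2)^(K+1)*(1/2)^k := by
      rw [show j = (K+1)+k by omega, pow_add]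
    calc (1/6^j : ℝ) * |V (Int.fract ((2:ℝ)^j*y)) (Int.fract ((3:ℝ)^j*y)) -
          V (Int.fract ((2:ℝ)^j*x)) (Int.fract ((3:ℝ)^j*x))|
        ≤ (1/6^j : ℝ) * ((2:ℝ)^j * |y - x| + (3:ℝ)^j * |y - x|) :=
          mul_le_mul_of_nonneg_left key (by positivity)
      _ = ((1/3:ℝ)^j + (1/2:ℝ)^j) * |y - x| := by
          rw [mul_add, ← mul_assoc, ← mul_assoc, h2, h3]; ring
      _ = ((1/3 : ℝ) ^ (K + 1) * (1/3) ^ k + (1/2 : ℝ) ^ (K + 1) * (1/2) ^ k) * |y - x| := by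
          rw [e3, e2]
  have hs3 : Summable (fun k : ℕ => (1/3 : ℝ) ^ (K + 1) * (1/3) ^ k) :=
    (summable_geometric_of_lt_one (by norm_num) (by norm_num)).mul_left _
  have hs2 : Summable (fun k : ℕ => (1/2 : ℝ) ^ (K + 1) * (1/2) ^ k) :=
    (summable_geometric_of_lt_one (by norm_num) (by norm_num)).mul_left _
  have hsb : Summable (fun k : ℕ =>
      ((1/3 : ℝ) ^ (K + 1) * (1/3) ^ k + (1/2 : ℝ) ^ (K + 1) * (1/2) ^ k) * |y - x|) :=
    (hs3.add hs2).mul_right _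
  have hdiff : tailSum K y - tailSum K x = ∑' k : ℕ, (fTerm y (k + K) - fTerm x (k + K)) :=
    (Summable.tsum_sub hsy hsx).symm
  have hnormsum : Summable (fun k : ℕ => ‖fTerm y (k + K) - fTerm x (k + K)‖) := by
    apply Summable.of_nonneg_of_le (fun k => norm_nonneg _) _ hsb
    intro k
    simpa [Real.norm_eq_abs] using hterm k
  calc |tailSum K y - tailSum K x| = ‖∑' k : ℕ, (fTerm y (k + K) - fTerm x (k + K))‖ := by
        rw [hdiff, Real.norm_eq_abs]
    _ ≤ ∑' k : ℕ, ‖fTerm y (k + K) - fTerm x (k + K)‖ := norm_tsum_le_tsum_norm hnormsum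
    _ ≤ ∑' k : ℕ, ((1/3 : ℝ) ^ (K + 1) * (1/3) ^ k + (1/2 : ℝ) ^ (K + 1) * (1/2) ^ k) * |y - x| := by
        apply Summable.tsum_le_tsum _ hnormsum hsb
        intro k
        simpa [Real.norm_eq_abs] using hterm k
    _ = ((1/3 : ℝ) ^ (K + 1) * (3/2) + (1/2 : ℝ) ^ (K + 1) * 2) * |y - x| := by
        rw [tsum_mul_right, Summable.tsum_add hs3 hs2, tsum_mul_left, tsum_mul_left,
          tsum_geometric_of_lt_one (by norm_num) (by norm_num),
          tsum_geometric_of_lt_one (by norm_num) (by norm_num)]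
        norm_num

lemma headL (x : ℝ) (hx1 : (73789/177147 : ℝ) ≤ x) (hx2 : x ≤ 277/665) :
    V (Int.fract x) (Int.fract x) + 2 * ∑ i ∈ Finset.range 12, (1 / 6 ^ (i + 1) : ℝ) *
      V (Int.fract ((2 : ℝ) ^ (i + 1) * x)) (Int.fract ((3 : ℝ) ^ (i + 1) * x)) =
    (-1476806371/362797056 : ℝ) + (7556871593/362797056 : ℝ) * x - 25 * x ^ 2 := by
  have e0 : Int.fract x = x - 0 := fract_eq_of _ 0 ⟨0, by norm_num⟩ (by linarith) (by linarith)
  have v0 : V (x - 0) (x - 0) = (x - 0) - (x - 0) * (x - 0) := V_eq_left (le_refl _)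
  have e2_1 : Int.fract ((2:ℝ) ^ (0 + 1) * x) = (2:ℝ) ^ (0 + 1) * x - 0 := fract_eq_of _ 0 ⟨0, by norm_num⟩ (by norm_num <;> linarith) (by norm_num <;> linarith)
  have e3_1 : Int.fract ((3:ℝ) ^ (0 + 1) * x) = (3:ℝ) ^ (0 + 1) * x - 1 := fract_eq_of _ 1 ⟨1, by norm_num⟩ (by norm_num <;> linarith) (by norm_num <;> linarith)
  have v1 : V ((2:ℝ) ^ (0 + 1) * x - 0) ((3:ℝ) ^ (0 + 1) * x - 1) = ((3:ℝ) ^ (0 + 1) * x - 1) - ((2:ℝ) ^ (0 + 1) * x - 0) * ((3:ℝ) ^ (0 + 1) * x - 1) := V_eq_right (by norm_num <;> linarith)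
  have e2_2 : Int.fract ((2:ℝ) ^ (1 + 1) * x) = (2:ℝ) ^ (1 + 1) * x - 1 := fract_eq_of _ 1 ⟨1, by norm_num⟩ (by norm_num <;> linarith) (by norm_num <;> linarith)
  have e3_2 : Int.fract ((3:ℝ) ^ (1 + 1) * x) = (3:ℝ) ^ (1 + 1) * x - 3 := fract_eq_of _ 3 ⟨3, by norm_num⟩ (by norm_num <;> linarith) (by norm_num <;> linarith)
  have v2 : V ((2:ℝ) ^ (1 + 1) * x - 1) ((3:ℝ) ^ (1 + 1) * x - 3) = ((2:ℝ) ^ (1 + 1) * x - 1) - ((2:ℝ) ^ (1 + 1) * x - 1) * ((3:ℝ) ^ (1 + 1) * x - 3) := V_eq_left (by norm_num <;> linarith)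
  have e2_3 : Int.fract ((2:ℝ) ^ (2 + 1) * x) = (2:ℝ) ^ (2 + 1) * x - 3 := fract_eq_of _ 3 ⟨3, by norm_num⟩ (by norm_num <;> linarith) (by norm_num <;> linarith)
  have e3_3 : Int.fract ((3:ℝ) ^ (2 + 1) * x) = (3:ℝ) ^ (2 + 1) * x - 11 := fract_eq_of _ 11 ⟨11, by norm_num⟩ (by norm_num <;> linarith) (by norm_num <;> linarith)
  have v3 : V ((2:ℝ) ^ (2 + 1) * x - 3) ((3:ℝ) ^ (2 + 1) * x - 11) = ((3:ℝ) ^ (2 + 1) * x - 11) - ((2:ℝ) ^ (2 + 1) * x - 3) * ((3:ℝ) ^ (2 + 1) * x - 11) := V_eq_right (by norm_num <;> linarith)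
  have e2_4 : Int.fract ((2:ℝ) ^ (3 + 1) * x) = (2:ℝ) ^ (3 + 1) * x - 6 := fract_eq_of _ 6 ⟨6, by norm_num⟩ (by norm_num <;> linarith) (by norm_num <;> linarith)
  have e3_4 : Int.fract ((3:ℝ) ^ (3 + 1) * x) = (3:ℝ) ^ (3 + 1) * x - 33 := fract_eq_of _ 33 ⟨33, by norm_num⟩ (by norm_num <;> linarith) (by norm_num <;> linarith)
  have v4 : V ((2:ℝ) ^ (3 + 1) * x - 6) ((3:ℝ) ^ (3 + 1) * x - 33) = ((2:ℝ) ^ (3 + 1) * x - 6) - ((2:ℝ) ^ (3 + 1) * x - 6) * ((3:ℝ) ^ (3 + 1) * x - 33) := V_eq_left (by norm_num <;> linarith)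
  have e2_5 : Int.fract ((2:ℝ) ^ (4 + 1) * x) = (2:ℝ) ^ (4 + 1) * x - 13 := fract_eq_of _ 13 ⟨13, by norm_num⟩ (by norm_num <;> linarith) (by norm_num <;> linarith)
  have e3_5 : Int.fract ((3:ℝ) ^ (4 + 1) * x) = (3:ℝ) ^ (4 + 1) * x - 101 := fract_eq_of _ 101 ⟨101, by norm_num⟩ (by norm_num <;> linarith) (by norm_num <;> linarith)
  have v5 : V ((2:ℝ) ^ (4 + 1) * x - 13) ((3:ℝ) ^ (4 + 1) * x - 101) = ((3:ℝ) ^ (4 + 1) * x - 101) - ((2:ℝ) ^ (4 + 1) * x - 13) * ((3:ℝ) ^ (4 + 1) * x - 101) := V_eq_right (by norm_num <;> linarith)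
  have e2_6 : Int.fract ((2:ℝ) ^ (5 + 1) * x) = (2:ℝ) ^ (5 + 1) * x - 26 := fract_eq_of _ 26 ⟨26, by norm_num⟩ (by norm_num <;> linarith) (by norm_num <;> linarith)
  have e3_6 : Int.fract ((3:ℝ) ^ (5 + 1) * x) = (3:ℝ) ^ (5 + 1) * x - 303 := fract_eq_of _ 303 ⟨303, by norm_num⟩ (by norm_num <;> linarith) (by norm_num <;> linarith)
  have v6 : V ((2:ℝ) ^ (5 + 1) * x - 26) ((3:ℝ) ^ (5 + 1) * x - 303) = ((3:ℝ) ^ (5 + 1) * x - 303) - ((2:ℝ) ^ (5 + 1) * x - 26) * ((3:ℝ) ^ (5 + 1) * x - 303) := V_eq_right (by norm_num <;> linarith)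
  have e2_7 : Int.fract ((2:ℝ) ^ (6 + 1) * x) = (2:ℝ) ^ (6 + 1) * x - 53 := fract_eq_of _ 53 ⟨53, by norm_num⟩ (by norm_num <;> linarith) (by norm_num <;> linarith)
  have e3_7 : Int.fract ((3:ℝ) ^ (6 + 1) * x) = (3:ℝ) ^ (6 + 1) * x - 910 := fract_eq_of _ 910 ⟨910, by norm_num⟩ (by norm_num <;> linarith) (by norm_num <;> linarith)
  have v7 : V ((2:ℝ) ^ (6 + 1) * x - 53) ((3:ℝ) ^ (6 + 1) * x - 910) = ((2:ℝ) ^ (6 + 1) * x - 53) - ((2:ℝ) ^ (6 + 1) * x - 53) * ((3:ℝ) ^ (6 + 1) * x - 910) := V_eq_left (by norm_num <;> linarith)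
  have e2_8 : Int.fract ((2:ℝ) ^ (7 + 1) * x) = (2:ℝ) ^ (7 + 1) * x - 106 := fract_eq_of _ 106 ⟨106, by norm_num⟩ (by norm_num <;> linarith) (by norm_num <;> linarith)
  have e3_8 : Int.fract ((3:ℝ) ^ (7 + 1) * x) = (3:ℝ) ^ (7 + 1) * x - 2732 := fract_eq_of _ 2732 ⟨2732, by norm_num⟩ (by norm_num <;> linarith) (by norm_num <;> linarith)
  have v8 : V ((2:ℝ) ^ (7 + 1) * x - 106) ((3:ℝ) ^ (7 + 1) * x - 2732) = ((2:ℝ) ^ (7 + 1) * x - 106) - ((2:ℝ) ^ (7 + 1) * x - 106) * ((3:ℝ) ^ (7 + 1) * x - 2732) := V_eq_left (by norm_num <;> linarith)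
  have e2_9 : Int.fract ((2:ℝ) ^ (8 + 1) * x) = (2:ℝ) ^ (8 + 1) * x - 213 := fract_eq_of _ 213 ⟨213, by norm_num⟩ (by norm_num <;> linarith) (by norm_num <;> linarith)
  have e3_9 : Int.fract ((3:ℝ) ^ (8 + 1) * x) = (3:ℝ) ^ (8 + 1) * x - 8198 := fract_eq_of _ 8198 ⟨8198, by norm_num⟩ (by norm_num <;> linarith) (by norm_num <;> linarith)
  have v9 : V ((2:ℝ) ^ (8 + 1) * x - 213) ((3:ℝ) ^ (8 + 1) * x - 8198) = ((2:ℝ) ^ (8 + 1) * x - 213) - ((2:ℝ) ^ (8 + 1) * x - 213) * ((3:ℝ) ^ (8 + 1) * x - 8198) := V_eq_left (by norm_num <;> linarith)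
  have e2_10 : Int.fract ((2:ℝ) ^ (9 + 1) * x) = (2:ℝ) ^ (9 + 1) * x - 426 := fract_eq_of _ 426 ⟨426, by norm_num⟩ (by norm_num <;> linarith) (by norm_num <;> linarith)
  have e3_10 : Int.fract ((3:ℝ) ^ (9 + 1) * x) = (3:ℝ) ^ (9 + 1) * x - 24596 := fract_eq_of _ 24596 ⟨24596, by norm_num⟩ (by norm_num <;> linarith) (by norm_num <;> linarith)
  have v10 : V ((2:ℝ) ^ (9 + 1) * x - 426) ((3:ℝ) ^ (9 + 1) * x - 24596) = ((3:ℝ) ^ (9 + 1) * x - 24596) - ((2:ℝ) ^ (9 + 1) * x - 426) * ((3:ℝ) ^ (9 + 1) * x - 24596) := V_eq_right (by norm_num <;> linarith)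
  have e2_11 : Int.fract ((2:ℝ) ^ (10 + 1) * x) = (2:ℝ) ^ (10 + 1) * x - 853 := fract_eq_of _ 853 ⟨853, by norm_num⟩ (by norm_num <;> linarith) (by norm_num <;> linarith)
  have e3_11 : Int.fract ((3:ℝ) ^ (10 + 1) * x) = (3:ℝ) ^ (10 + 1) * x - 73789 := fract_eq_of _ 73789 ⟨73789, by norm_num⟩ (by norm_num <;> linarith) (by norm_num <;> linarith)
  have v11 : V ((2:ℝ) ^ (10 + 1) * x - 853) ((3:ℝ) ^ (10 + 1) * x - 73789) = ((3:ℝ) ^ (10 + 1) * x - 73789) - ((2:ℝ) ^ (10 + 1) * x - 853) * ((3:ℝ) ^ (10 + 1) * x - 73789) := V_eq_right (by norm_num <;> linarith)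
  have e2_12 : Int.fract ((2:ℝ) ^ (11 + 1) * x) = (2:ℝ) ^ (11 + 1) * x - 1706 := fract_eq_of _ 1706 ⟨1706, by norm_num⟩ (by norm_num <;> linarith) (by norm_num <;> linarith)
  have e3_12 : Int.fract ((3:ℝ) ^ (11 + 1) * x) = (3:ℝ) ^ (11 + 1) * x - 221367 := fract_eq_of _ 221367 ⟨221367, by norm_num⟩ (by norm_num <;> linarith) (by norm_num <;> linarith)
  have v12 : V ((2:ℝ) ^ (11 + 1) * x - 1706) ((3:ℝ) ^ (11 + 1) * x - 221367) = ((3:ℝ) ^ (11 + 1) * x - 221367) - ((2:ℝ) ^ (11 + 1) * x - 1706) * ((3:ℝ) ^ (11 + 1) * x - 221367) := V_eq_right (by norm_num <;> linarith)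
  simp only [Finset.sum_range_succ, Finset.sum_range_zero]
  rw [e0, e2_1, e3_1, e2_2, e3_2, e2_3, e3_3, e2_4, e3_4, e2_5, e3_5, e2_6, e3_6, e2_7, e3_7, e2_8, e3_8, e2_9, e3_9, e2_10, e3_10, e2_11, e3_11, e2_12, e3_12]
  rw [v0, v1, v2, v3, v4, v5, v6, v7, v8, v9, v10, v11, v12]
  ring

lemma headR (x : ℝ) (hx1 : (277/665 : ℝ) ≤ x) (hx2 : x < 911/2187) :
    V (Int.fract x) (Int.fract x) + 2 * ∑ i ∈ Finset.range 9, (1 / 6 ^ (i + 1) : ℝ) *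
      V (Int.fract ((2 : ℝ) ^ (i + 1) * x)) (Int.fract ((3 : ℝ) ^ (i + 1) * x)) =
    (-1689011/559872 : ℝ) + (982903/62208 : ℝ) * x - 19 * x ^ 2 := by
  have e0 : Int.fract x = x - 0 := fract_eq_of _ 0 ⟨0, by norm_num⟩ (by linarith) (by linarith)
  have v0 : V (x - 0) (x - 0) = (x - 0) - (x - 0) * (x - 0) := V_eq_left (le_refl _)
  have e2_1 : Int.fract ((2:ℝ) ^ (0 + 1) * x) = (2:ℝ) ^ (0 + 1) * x - 0 := fract_eq_of _ 0 ⟨0, by norm_num⟩ (by norm_num <;> linarith) (by norm_num <;> linarith)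
  have e3_1 : Int.fract ((3:ℝ) ^ (0 + 1) * x) = (3:ℝ) ^ (0 + 1) * x - 1 := fract_eq_of _ 1 ⟨1, by norm_num⟩ (by norm_num <;> linarith) (by norm_num <;> linarith)
  have v1 : V ((2:ℝ) ^ (0 + 1) * x - 0) ((3:ℝ) ^ (0 + 1) * x - 1) = ((3:ℝ) ^ (0 + 1) * x - 1) - ((2:ℝ) ^ (0 + 1) * x - 0) * ((3:ℝ) ^ (0 + 1) * x - 1) := V_eq_right (by norm_num <;> linarith)
  have e2_2 : Int.fract ((2:ℝ) ^ (1 + 1) * x) = (2:ℝ) ^ (1 + 1) * x - 1 := fract_eq_of _ 1 ⟨1, by norm_num⟩ (by norm_num <;> linarith) (by norm_num <;> linarith)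
  have e3_2 : Int.fract ((3:ℝ) ^ (1 + 1) * x) = (3:ℝ) ^ (1 + 1) * x - 3 := fract_eq_of _ 3 ⟨3, by norm_num⟩ (by norm_num <;> linarith) (by norm_num <;> linarith)
  have v2 : V ((2:ℝ) ^ (1 + 1) * x - 1) ((3:ℝ) ^ (1 + 1) * x - 3) = ((2:ℝ) ^ (1 + 1) * x - 1) - ((2:ℝ) ^ (1 + 1) * x - 1) * ((3:ℝ) ^ (1 + 1) * x - 3) := V_eq_left (by norm_num <;> linarith)
  have e2_3 : Int.fract ((2:ℝ) ^ (2 + 1) * x) = (2:ℝ) ^ (2 + 1) * x - 3 := fract_eq_of _ 3 ⟨3, by norm_num⟩ (by norm_num <;> linarith) (by norm_num <;> linarith)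
  have e3_3 : Int.fract ((3:ℝ) ^ (2 + 1) * x) = (3:ℝ) ^ (2 + 1) * x - 11 := fract_eq_of _ 11 ⟨11, by norm_num⟩ (by norm_num <;> linarith) (by norm_num <;> linarith)
  have v3 : V ((2:ℝ) ^ (2 + 1) * x - 3) ((3:ℝ) ^ (2 + 1) * x - 11) = ((3:ℝ) ^ (2 + 1) * x - 11) - ((2:ℝ) ^ (2 + 1) * x - 3) * ((3:ℝ) ^ (2 + 1) * x - 11) := V_eq_right (by norm_num <;> linarith)
  have e2_4 : Int.fract ((2:ℝ) ^ (3 + 1) * x) = (2:ℝ) ^ (3 + 1) * x - 6 := fract_eq_of _ 6 ⟨6, by norm_num⟩ (by norm_num <;> linarith) (by norm_num <;> linarith)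
  have e3_4 : Int.fract ((3:ℝ) ^ (3 + 1) * x) = (3:ℝ) ^ (3 + 1) * x - 33 := fract_eq_of _ 33 ⟨33, by norm_num⟩ (by norm_num <;> linarith) (by norm_num <;> linarith)
  have v4 : V ((2:ℝ) ^ (3 + 1) * x - 6) ((3:ℝ) ^ (3 + 1) * x - 33) = ((2:ℝ) ^ (3 + 1) * x - 6) - ((2:ℝ) ^ (3 + 1) * x - 6) * ((3:ℝ) ^ (3 + 1) * x - 33) := V_eq_left (by norm_num <;> linarith)
  have e2_5 : Int.fract ((2:ℝ) ^ (4 + 1) * x) = (2:ℝ) ^ (4 + 1) * x - 13 := fract_eq_of _ 13 ⟨13, by norm_num⟩ (by norm_num <;> linarith) (by norm_num <;> linarith)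
  have e3_5 : Int.fract ((3:ℝ) ^ (4 + 1) * x) = (3:ℝ) ^ (4 + 1) * x - 101 := fract_eq_of _ 101 ⟨101, by norm_num⟩ (by norm_num <;> linarith) (by norm_num <;> linarith)
  have v5 : V ((2:ℝ) ^ (4 + 1) * x - 13) ((3:ℝ) ^ (4 + 1) * x - 101) = ((3:ℝ) ^ (4 + 1) * x - 101) - ((2:ℝ) ^ (4 + 1) * x - 13) * ((3:ℝ) ^ (4 + 1) * x - 101) := V_eq_right (by norm_num <;> linarith)
  have e2_6 : Int.fract ((2:ℝ) ^ (5 + 1) * x) = (2:ℝ) ^ (5 + 1) * x - 26 := fract_eq_of _ 26 ⟨26, by norm_num⟩ (by norm_num <;> linarith) (by norm_num <;> linarith)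
  have e3_6 : Int.fract ((3:ℝ) ^ (5 + 1) * x) = (3:ℝ) ^ (5 + 1) * x - 303 := fract_eq_of _ 303 ⟨303, by norm_num⟩ (by norm_num <;> linarith) (by norm_num <;> linarith)
  have v6 : V ((2:ℝ) ^ (5 + 1) * x - 26) ((3:ℝ) ^ (5 + 1) * x - 303) = ((2:ℝ) ^ (5 + 1) * x - 26) - ((2:ℝ) ^ (5 + 1) * x - 26) * ((3:ℝ) ^ (5 + 1) * x - 303) := V_eq_left (by norm_num <;> linarith)
  have e2_7 : Int.fract ((2:ℝ) ^ (6 + 1) * x) = (2:ℝ) ^ (6 + 1) * x - 53 := fract_eq_of _ 53 ⟨53, by norm_num⟩ (by norm_num <;> linarith) (by norm_num <;> linarith)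
  have e3_7 : Int.fract ((3:ℝ) ^ (6 + 1) * x) = (3:ℝ) ^ (6 + 1) * x - 910 := fract_eq_of _ 910 ⟨910, by norm_num⟩ (by norm_num <;> linarith) (by norm_num <;> linarith)
  have v7 : V ((2:ℝ) ^ (6 + 1) * x - 53) ((3:ℝ) ^ (6 + 1) * x - 910) = ((2:ℝ) ^ (6 + 1) * x - 53) - ((2:ℝ) ^ (6 + 1) * x - 53) * ((3:ℝ) ^ (6 + 1) * x - 910) := V_eq_left (by norm_num <;> linarith)
  have e2_8 : Int.fract ((2:ℝ) ^ (7 + 1) * x) = (2:ℝ) ^ (7 + 1) * x - 106 := fract_eq_of _ 106 ⟨106, by norm_num⟩ (by norm_num <;> linarith) (by norm_num <;> linarith)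
  have e3_8 : Int.fract ((3:ℝ) ^ (7 + 1) * x) = (3:ℝ) ^ (7 + 1) * x - 2732 := fract_eq_of _ 2732 ⟨2732, by norm_num⟩ (by norm_num <;> linarith) (by norm_num <;> linarith)
  have v8 : V ((2:ℝ) ^ (7 + 1) * x - 106) ((3:ℝ) ^ (7 + 1) * x - 2732) = ((2:ℝ) ^ (7 + 1) * x - 106) - ((2:ℝ) ^ (7 + 1) * x - 106) * ((3:ℝ) ^ (7 + 1) * x - 2732) := V_eq_left (by norm_num <;> linarith)
  have e2_9 : Int.fract ((2:ℝ) ^ (8 + 1) * x) = (2:ℝ) ^ (8 + 1) * x - 213 := fract_eq_of _ 213 ⟨213, by norm_num⟩ (by norm_num <;> linarith) (by norm_num <;> linarith)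
  have e3_9 : Int.fract ((3:ℝ) ^ (8 + 1) * x) = (3:ℝ) ^ (8 + 1) * x - 8198 := fract_eq_of _ 8198 ⟨8198, by norm_num⟩ (by norm_num <;> linarith) (by norm_num <;> linarith)
  have v9 : V ((2:ℝ) ^ (8 + 1) * x - 213) ((3:ℝ) ^ (8 + 1) * x - 8198) = ((2:ℝ) ^ (8 + 1) * x - 213) - ((2:ℝ) ^ (8 + 1) * x - 213) * ((3:ℝ) ^ (8 + 1) * x - 8198) := V_eq_left (by norm_num <;> linarith)
  simp only [Finset.sum_range_succ, Finset.sum_range_zero]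
  rw [e0, e2_1, e3_1, e2_2, e3_2, e2_3, e3_3, e2_4, e3_4, e2_5, e3_5, e2_6, e3_6, e2_7, e3_7, e2_8, e3_8, e2_9, e3_9]
  rw [v0, v1, v2, v3, v4, v5, v6, v7, v8, v9]
  ring

lemma left_mono : StrictMonoOn sigmaSq (Set.Icc (73789/177147 : ℝ) (277/665)) := by
  intro x hx y hy hxy
  have ex : sigmaSq x = ((-1476806371/362797056 : ℝ) + (7556871593/362797056 : ℝ) * x - 25 * x ^ 2) + 2 * tailSum 12 x := by
    rw [sigma_decomp 12 x, ← headL x hx.1 hx.2]; ring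
  have ey : sigmaSq y = ((-1476806371/362797056 : ℝ) + (7556871593/362797056 : ℝ) * y - 25 * y ^ 2) + 2 * tailSum 12 y := by
    rw [sigma_decomp 12 y, ← headL y hy.1 hy.2]; ring
  have ht := tail_diff_le 12 x y
  rw [abs_of_pos (sub_pos.2 hxy)] at ht
  have ht' : -(((1/3 : ℝ) ^ 13 * (3/2) + (1/2 : ℝ) ^ 13 * 2) * (y - x)) ≤
      tailSum 12 y - tailSum 12 x := by
    have := neg_abs_le (tailSum 12 y - tailSum 12 x); linarith
  have hkey : (0:ℝ) < (y - x) * ((7556871593/362797056 : ℝ) - 2 * ((1/3 : ℝ) ^ 13 * (3/2) + (1/2 : ℝ) ^ 13 * 2)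
      - 25 * (x + y)) := by
    apply mul_pos (sub_pos.2 hxy)
    have h1 : x ≤ 277/665 := hx.2
    have h2 : y ≤ 277/665 := hy.2
    norm_num
    linarith
  rw [ex, ey]
  nlinarith [hkey, ht']

lemma right_anti : StrictAntiOn sigmaSq (Set.Ico (277/665 : ℝ) (911/2187)) := by
  intro x hx y hy hxy
  have ex : sigmaSq x = ((-1689011/559872 : ℝ) + (982903/62208 : ℝ) * x - 19 * x ^ 2) + 2 * tailSum 9 x := by
    rw [sigma_decomp 9 x, ← headR x hx.1 hx.2]; ring
  have ey : sigmaSq y = ((-1689011/559872 : ℝ) + (982903/62208 : ℝ) * y - 19 * y ^ 2) + 2 * tailSum 9 y := by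
    rw [sigma_decomp 9 y, ← headR y hy.1 hy.2]; ring
  have ht := tail_diff_le 9 x y
  rw [abs_of_pos (sub_pos.2 hxy)] at ht
  have ht' : tailSum 9 y - tailSum 9 x ≤
      ((1/3 : ℝ) ^ 10 * (3/2) + (1/2 : ℝ) ^ 10 * 2) * (y - x) := by
    have := le_abs_self (tailSum 9 y - tailSum 9 x); linarith
  have hkey : (0:ℝ) < (y - x) * (19 * (x + y) - (982903/62208 : ℝ)
      - 2 * ((1/3 : ℝ) ^ 10 * (3/2) + (1/2 : ℝ) ^ 10 * 2)) := by
    apply mul_pos (sub_pos.2 hxy)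
    have h1 : (277/665 : ℝ) ≤ x := hx.1
    have h2 : (277/665 : ℝ) ≤ y := hy.1
    norm_num
    linarith
  rw [ex, ey]
  nlinarith [hkey, ht']

theorem sigmaSq_max_near_c :
    (∀ x ∈ Set.Ico (73789/177147 : ℝ) (911/2187), x ≠ c → sigmaSq x < sigmaSq c) ∧
      StrictMonoOn sigmaSq (Set.Icc (73789/177147 : ℝ) c) ∧
      StrictAntiOn sigmaSq (Set.Ico c (911/2187 : ℝ)) := by
  have hc : c = (277/665 : ℝ) := rfl
  refine ⟨?_, by rw [hc]; exact left_mono, by rw [hc]; exact right_anti⟩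
  intro x hx hne
  rcases lt_or_gt_of_ne hne with h | h
  · rw [hc] at h
    have h1 : x ∈ Set.Icc (73789/177147 : ℝ) (277/665) := ⟨hx.1, h.le⟩
    have h2 : (277/665 : ℝ) ∈ Set.Icc (73789/177147 : ℝ) (277/665) :=
      ⟨by norm_num, le_refl _⟩
    have := left_mono h1 h2 h
    rw [hc]; exact this
  · rw [hc] at h
    have h1 : x ∈ Set.Ico (277/665 : ℝ) (911/2187) := ⟨h.le, hx.2⟩
    have h2 : (277/665 : ℝ) ∈ Set.Ico (277/665 : ℝ) (911/2187) :=
      ⟨le_refl _, by norm_num⟩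
    have := right_anti h2 h1 h
    rw [hc]; exact this
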